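/- For every n with 2 ≤ n ≤ N, the polynomial Ĉ_n := ∑_{i=0}^{n} ∑_{k=0}^{n−i} ((−1)^k/(2^k·k!)) · S^{(k)}(n−i) · x_i · x_1^k · x_0^{n−k} ∈ ℚ[x_0,…,x_N] lies in the kernel of the first Kravchuk derivation: D_{K1}(Ĉ_n) = 0. (Ĉ_n equals x_0 times the Cayley element C_n of D_{K1}, up to the nonzero rational factor n·(n−2)!.) -/

import Mathlib

/-- The variable `x_i` of `ℚ[x_0,…,x_N]` (for `i ≤ N`). -/
noncomputable def Xv (N : ℕ) (i : ℕ) : MvPolynomial (Fin (N + 1)) ℚ :=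
  if h : i ≤ N then MvPolynomial.X ⟨i, Nat.lt_succ_of_le h⟩ else 0

/-- The first Kravchuk derivation: `D_{K1}(x_0)=0`,
`D_{K1}(x_m)=∑_{i=1}^m ((1-(-1)^i)/(2i)) x_{m-i}`. -/
noncomputable def DK1 (N : ℕ) :
    Derivation ℚ (MvPolynomial (Fin (N + 1)) ℚ) (MvPolynomial (Fin (N + 1)) ℚ) :=
  MvPolynomial.mkDerivation ℚ fun m : Fin (N + 1) =>
    ∑ i ∈ Finset.Icc 1 (m : ℕ),
      MvPolynomial.C ((1 - (-1 : ℚ) ^ i) / (2 * i)) * Xv N ((m : ℕ) - i)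

/-- Signed Stirling numbers of the first kind: `t(t-1)⋯(t-m+1) = ∑_k s(m,k) t^k`. -/
noncomputable def stirling1 (m k : ℕ) : ℚ := (descPochhammer ℚ m).coeff k

/-- `S^{(k)}(n) = ∑_{m=k}^n binom(n-1,m-1) (2^m k!/m!) s(m,k)` for `k ≥ 1` (zero for
`n < k`), with `S^{(0)}(n) = 1` if `n = 0` and `0` otherwise. -/
noncomputable def Sfun (k n : ℕ) : ℚ :=
  if k = 0 then (if n = 0 then 1 else 0)
  else ∑ m ∈ Finset.Icc k n,
    ((n - 1).choose (m - 1) : ℚ) * (2 ^ m * (Nat.factorial k) / (Nat.factorial m))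
      * stirling1 m k

/-- The (normalized) Cayley element
`Ĉ_n = ∑_{i=0}^n ∑_{k=0}^{n-i} ((-1)^k/(2^k k!)) S^{(k)}(n-i) x_i x_1^k x_0^{n-k}`. -/
noncomputable def Chat (N n : ℕ) : MvPolynomial (Fin (N + 1)) ℚ :=
  ∑ i ∈ Finset.range (n + 1), ∑ k ∈ Finset.range (n - i + 1),
    MvPolynomial.C ((-1 : ℚ) ^ k / (2 ^ k * (Nat.factorial k)) * Sfun k (n - i))
      * Xv N i * (Xv N 1) ^ k * (Xv N 0) ^ (n - k)


open PowerSeries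

noncomputable def Mser : PowerSeries ℚ := PowerSeries.mk fun t => if t = 0 then 0 else 2

noncomputable def Lser : PowerSeries ℚ := PowerSeries.mk fun t => if Odd t then (2 : ℚ) / (t : ℚ) else 0

lemma sum_range_choose_eq (n m : ℕ) : ∑ j ∈ Finset.range n, j.choose m = n.choose (m + 1) := by
  induction n with
  | zero => simp
  | succ n ih => rw [Finset.sum_range_succ, ih, Nat.choose_succ_succ (n) m, Nat.add_comm]

lemma constantCoeff_Mser : PowerSeries.constantCoeff (R := ℚ) Mser = 0 := by
  rw [← PowerSeries.coeff_zero_eq_constantCoeff]; simp [Mser]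

lemma coeff_zero_Mser_pow (m : ℕ) (hm : 1 ≤ m) :
    PowerSeries.coeff (R := ℚ) 0 (Mser ^ m) = 0 := by
  rw [PowerSeries.coeff_zero_eq_constantCoeff, map_pow, constantCoeff_Mser,
    zero_pow (by omega)]

lemma coeff_Mser_pow (m : ℕ) (hm : 1 ≤ m) : ∀ n, 1 ≤ n →
    PowerSeries.coeff (R := ℚ) n (Mser ^ m) = 2 ^ m * ((n - 1).choose (m - 1)) := by
  induction m with
  | zero => omega
  | succ m ih =>
    intro n hn
    rcases Nat.eq_or_lt_of_le hm with h1 | h1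
    · have : m = 0 := by omega
      subst this
      simp [Mser, Nat.one_le_iff_ne_zero.mp hn]
    · have hm' : 1 ≤ m := by omega
      rw [pow_succ, mul_comm (Mser ^ m) Mser, PowerSeries.coeff_mul,
        Finset.Nat.sum_antidiagonal_eq_sum_range_succ_mk, Finset.sum_range_succ']
      have h0 : PowerSeries.coeff (R := ℚ) 0 Mser = 0 := by simp [Mser]
      rw [h0, zero_mul, add_zero]
      have hn' : n = (n - 1) + 1 := by omega
      rw [hn', Finset.sum_range_succ]
      have htop : (PowerSeries.coeff (R := ℚ)) (n - 1 + 1 - (n - 1 + 1)) (Mser ^ m) = 0 := by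
        simp [coeff_zero_Mser_pow m hm']
      rw [htop, mul_zero, add_zero]
      have hterm : ∀ i ∈ Finset.range (n - 1),
          (PowerSeries.coeff (R := ℚ)) (i + 1) Mser *
            (PowerSeries.coeff (R := ℚ)) (n - 1 + 1 - (i + 1)) (Mser ^ m)
          = 2 * (2 ^ m * (((n - 1) - 1 - i).choose (m - 1))) := by
        intro i hi
        rw [Finset.mem_range] at hi
        have h1 : (PowerSeries.coeff (R := ℚ)) (i + 1) Mser = 2 := by simp [Mser]
        have h2 : n - 1 + 1 - (i + 1) = n - 1 - i := by omega
        have h3 : 1 ≤ n - 1 - i := by omega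
        rw [h1, h2, ih hm' _ h3, show n - 1 - i - 1 = n - 1 - 1 - i from by omega]
      rw [Finset.sum_congr rfl hterm, ← Finset.mul_sum, ← Finset.mul_sum]
      rw [Finset.sum_range_reflect (fun j => ((j : ℕ).choose (m - 1) : ℚ)) (n - 1)]
      rw [← Nat.cast_sum]
      rw [sum_range_choose_eq (n - 1) (m - 1)]
      have : m - 1 + 1 = m := by omega
      rw [this]
      push_cast
      ring

noncomputable def Tfun (k n : ℕ) : ℚ := PowerSeries.coeff (R := ℚ) n (Lser ^ k)

lemma coeff_Lser (t : ℕ) :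
    PowerSeries.coeff (R := ℚ) t Lser = if Odd t then (2 : ℚ) / (t : ℚ) else 0 := by simp [Lser]

lemma constantCoeff_Lser : PowerSeries.constantCoeff (R := ℚ) Lser = 0 := by
  rw [← PowerSeries.coeff_zero_eq_constantCoeff]; simp [Lser]

lemma dL_eq : (1 - PowerSeries.X ^ 2) * (PowerSeries.derivative ℚ Lser) = 2 := by
  ext n
  have h2 : (2 : PowerSeries ℚ) = PowerSeries.C (R := ℚ) 2 := rfl
  rw [sub_mul, one_mul, map_sub, PowerSeries.coeff_X_pow_mul',
    PowerSeries.coeff_derivative, coeff_Lser, h2, PowerSeries.coeff_C]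
  simp only [Nat.odd_iff]
  rcases Nat.lt_or_ge n 2 with h | h
  · rw [if_neg (show ¬ 2 ≤ n by omega)]
    interval_cases n <;> norm_num
  · rw [if_pos h, PowerSeries.coeff_derivative, coeff_Lser,
      if_neg (show ¬ n = 0 by omega)]
    simp only [Nat.odd_iff]
    rcases Nat.even_or_odd n with he | ho
    · have e1 : (n + 1) % 2 = 1 := by rcases he with ⟨t, ht⟩; omega
      have e2 : (n - 2 + 1) % 2 = 1 := by rcases he with ⟨t, ht⟩; omega
      rw [if_pos e1, if_pos e2]
      have h5 : ((n - 2 + 1 : ℕ) : ℚ) = (n : ℚ) - 1 := by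
        have h6 : (2 : ℕ) ≤ n := h
        push_cast [Nat.cast_sub h6]; ring
      rw [h5]
      have hne : ((n : ℚ) + 1) ≠ 0 := by positivity
      have hne2 : ((n : ℚ) - 1) ≠ 0 := by
        have : (2 : ℚ) ≤ (n : ℚ) := by exact_mod_cast h
        intro hc; linarith
      push_cast
      field_simp
      push_cast [Nat.cast_sub h]
      ring
    · have e1 : (n + 1) % 2 ≠ 1 := by rcases ho with ⟨t, ht⟩; omega
      have e2 : (n - 2 + 1) % 2 ≠ 1 := by rcases ho with ⟨t, ht⟩; omega
      rw [if_neg e1, if_neg e2]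
      ring

lemma Tfun_zero (n : ℕ) : Tfun 0 n = if n = 0 then 1 else 0 := by
  simp [Tfun, PowerSeries.coeff_one]

lemma Tfun_zero_right (k : ℕ) (hk : k ≠ 0) : Tfun k 0 = 0 := by
  rw [Tfun, PowerSeries.coeff_zero_eq_constantCoeff, map_pow, constantCoeff_Lser,
    zero_pow hk]

lemma Tfun_one_right (k : ℕ) : Tfun k 1 = if k = 1 then 2 else 0 := by
  match k with
  | 0 => simp [Tfun, PowerSeries.coeff_one]
  | 1 => norm_num [Tfun, pow_one, coeff_Lser]
  | (k + 2) =>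
    rw [Tfun, pow_succ, PowerSeries.coeff_mul, Finset.Nat.sum_antidiagonal_eq_sum_range_succ_mk]
    rw [if_neg (by omega)]
    rw [Finset.sum_range_succ, Finset.sum_range_one]
    have h1 : PowerSeries.coeff (R := ℚ) 0 (Lser ^ (k + 1)) = 0 := by
      rw [PowerSeries.coeff_zero_eq_constantCoeff, map_pow, constantCoeff_Lser,
        zero_pow (by omega)]
    have h2 : PowerSeries.coeff (R := ℚ) 0 Lser = 0 := by simp [Lser]
    simp [h1, h2]

lemma L_pow_deriv (k : ℕ) :
    (1 - PowerSeries.X ^ 2) * (PowerSeries.derivative ℚ (Lser ^ k))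
      = PowerSeries.C (R := ℚ) (2 * k) * Lser ^ (k - 1) := by
  rw [Derivation.leibniz_pow, smul_eq_mul, nsmul_eq_mul, ← map_natCast (PowerSeries.C (R := ℚ)) k]
  calc (1 - PowerSeries.X ^ 2) *
        (PowerSeries.C (R := ℚ) k * (Lser ^ (k - 1) * PowerSeries.derivative ℚ Lser))
      = PowerSeries.C (R := ℚ) k * Lser ^ (k - 1) *
        ((1 - PowerSeries.X ^ 2) * PowerSeries.derivative ℚ Lser) := by ring
    _ = PowerSeries.C (R := ℚ) k * Lser ^ (k - 1) * 2 := by rw [dL_eq]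
    _ = PowerSeries.C (R := ℚ) (2 * k) * Lser ^ (k - 1) := by
        rw [show (2 : PowerSeries ℚ) = PowerSeries.C (R := ℚ) 2 from rfl, map_mul]; ring

lemma Tfun_rec (k n : ℕ) :
    ((n : ℚ) + 2) * Tfun k (n + 2) = n * Tfun k n + 2 * k * Tfun (k - 1) (n + 1) := by
  have h2 := congrArg (PowerSeries.coeff (R := ℚ) (n + 1)) (L_pow_deriv k)
  rw [sub_mul, one_mul, map_sub, PowerSeries.coeff_X_pow_mul',
    PowerSeries.coeff_derivative, PowerSeries.coeff_C_mul] at h2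
  rcases Nat.eq_zero_or_pos n with rfl | hn
  · rw [if_neg (by omega)] at h2
    simp only [Tfun]
    push_cast at h2 ⊢
    linarith
  · rw [if_pos (by omega), PowerSeries.coeff_derivative,
      show n + 1 - 2 = n - 1 from by omega] at h2
    have e : ((n - 1 : ℕ) : ℚ) + 1 = n := by
      rw [Nat.cast_sub (by omega : 1 ≤ n)]; ring
    rw [show n - 1 + 1 = n from by omega, e] at h2
    simp only [Tfun]
    push_cast at h2 ⊢
    linarith


lemma stirling1_zero_zero : stirling1 0 0 = 1 := by
  simp [stirling1, descPochhammer]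

lemma stirling1_zero (k : ℕ) (hk : k ≠ 0) : stirling1 0 k = 0 := by
  simp [stirling1, descPochhammer, Polynomial.coeff_one, hk]

lemma stirling1_zero_right (m : ℕ) (hm : m ≠ 0) : stirling1 m 0 = 0 := by
  obtain ⟨m, rfl⟩ := Nat.exists_eq_succ_of_ne_zero hm
  simp [stirling1, descPochhammer_succ_left, Polynomial.coeff_zero_eq_eval_zero]

lemma stirling1_eq_zero_of_lt {m k : ℕ} (h : m < k) : stirling1 m k = 0 := by
  apply Polynomial.coeff_eq_zero_of_natDegree_lt
  rwa [descPochhammer_natDegree]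

lemma stirling1_rec (m k : ℕ) :
    stirling1 (m + 1) (k + 1) = stirling1 m k - m * stirling1 m (k + 1) := by
  simp [stirling1, descPochhammer_succ_right, Polynomial.coeff_mul_X, mul_sub,
    Polynomial.coeff_natCast_ite]
  ring

lemma stirling1_one_one : stirling1 1 1 = 1 := by
  have := stirling1_rec 0 0
  simp [stirling1_zero_zero, stirling1_zero 1 one_ne_zero] at this
  simpa using this


lemma Sfun_zero (n : ℕ) : Sfun 0 n = if n = 0 then 1 else 0 := rfl

lemma Sfun_zero_right (k : ℕ) (hk : k ≠ 0) : Sfun k 0 = 0 := by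
  rw [Sfun, if_neg hk, Finset.Icc_eq_empty (by omega), Finset.sum_empty]

lemma Sfun_eq_sum (k n : ℕ) (hk : k ≠ 0) :
    Sfun k n = ∑ m ∈ Finset.Icc 1 n,
      ((n - 1).choose (m - 1) : ℚ) * (2 ^ m * (Nat.factorial k) / (Nat.factorial m))
        * stirling1 m k := by
  rw [Sfun, if_neg hk]
  apply Finset.sum_subset
  · intro m hm
    rw [Finset.mem_Icc] at *
    omega
  · intro m hm hm'
    rw [Finset.mem_Icc] at *
    rw [stirling1_eq_zero_of_lt (by omega)]
    ring

lemma Sfun_one_right (k : ℕ) : Sfun k 1 = if k = 1 then 2 else 0 := by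
  match k with
  | 0 => simp [Sfun_zero]
  | 1 =>
    rw [Sfun, if_neg one_ne_zero]
    norm_num [stirling1_one_one]
  | (k + 2) =>
    rw [if_neg (by omega), Sfun, if_neg (by omega),
      Finset.Icc_eq_empty (by omega), Finset.sum_empty]

lemma nat_I1 (n a : ℕ) : (n + 3) * Nat.choose (n + 2) (a + 1)
    = (n + 1) * Nat.choose n (a + 1) + (a + 2) * Nat.choose (n + 1) a
      + 2 * ((a + 2) * Nat.choose (n + 1) (a + 1)) := by
  have h1 := Nat.add_one_mul_choose_eq (n + 2) (a + 1)
  have h2 := Nat.add_one_mul_choose_eq n (a + 1)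
  rw [show n + 2 + 1 = n + 3 from by omega, show a + 1 + 1 = a + 2 from by omega] at h1
  rw [show a + 1 + 1 = a + 2 from by omega] at h2
  have h3 : (n + 3).choose (a + 2) = (n + 2).choose (a + 1) + (n + 2).choose (a + 2) :=
    Nat.choose_succ_succ (n + 2) (a + 1)
  have h4 : (n + 2).choose (a + 1) = (n + 1).choose a + (n + 1).choose (a + 1) :=
    Nat.choose_succ_succ (n + 1) a
  have h5 : (n + 2).choose (a + 2) = (n + 1).choose (a + 1) + (n + 1).choose (a + 2) :=
    Nat.choose_succ_succ (n + 1) (a + 1)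
  have hC : (n + 3).choose (a + 2)
      = (n + 1).choose (a + 2) + (n + 1).choose a + 2 * (n + 1).choose (a + 1) := by omega
  rw [h1, h2, hC]
  ring

/-- The rational binomial identity behind the recurrence. -/
lemma I1 (n m : ℕ) (hm : 1 ≤ m) :
    ((n : ℚ) + 2) * Nat.choose (n + 1) (m - 1) - n * Nat.choose (n - 1) (m - 1)
      = m * (if m = 1 then 0 else (Nat.choose n (m - 2) : ℚ)) + 2 * m * Nat.choose n (m - 1) := by
  match m, hm with
  | 1, _ => simp
  | (a + 2), _ =>
    rw [if_neg (by omega), show a + 2 - 1 = a + 1 from by omega,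
        show a + 2 - 2 = a from by omega]
    rcases Nat.eq_zero_or_pos n with rfl | hn
    · rcases Nat.eq_zero_or_pos a with rfl | ha
      · norm_num
      · rw [show (0 : ℕ) + 1 = 1 from rfl, show (0 : ℕ) - 1 = 0 from rfl,
            Nat.choose_eq_zero_of_lt (show 1 < a + 1 by omega),
            Nat.choose_eq_zero_of_lt (show 0 < a by omega),
            Nat.choose_eq_zero_of_lt (show 0 < a + 1 by omega)]
        norm_num
    · obtain ⟨n', rfl⟩ : ∃ n', n = n' + 1 := ⟨n - 1, by omega⟩
      have hkey := nat_I1 n' a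
      rw [show n' + 1 + 1 = n' + 2 from by omega, show n' + 1 - 1 = n' from by omega]
      have hcast := congrArg (fun x : ℕ => (x : ℚ)) hkey
      push_cast at hcast ⊢
      linarith

lemma two_k_Sfun (k n : ℕ) (hk : 1 ≤ k) :
    2 * (k : ℚ) * Sfun (k - 1) (n + 1)
      = ∑ m ∈ Finset.Icc 1 (n + 1),
          (Nat.choose n (m - 1) : ℚ) * (2 ^ (m + 1) * (Nat.factorial k) / (Nat.factorial m))
            * stirling1 m (k - 1) := by
  match k, hk with
  | 1, _ =>
    rw [show (1 : ℕ) - 1 = 0 from rfl, Sfun_zero, if_neg (by omega)]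
    rw [Finset.sum_eq_zero]
    · ring
    · intro m hm
      rw [Finset.mem_Icc] at hm
      rw [stirling1_zero_right m (by omega)]
      ring
  | (k + 2), _ =>
    rw [show k + 2 - 1 = k + 1 from by omega, Sfun_eq_sum (k + 1) (n + 1) (by omega),
      Finset.mul_sum]
    apply Finset.sum_congr rfl
    intro m hm
    rw [Finset.mem_Icc] at hm
    rw [show n + 1 - 1 = n from by omega]
    have hf : ((Nat.factorial (k + 2) : ℚ)) = (k + 2) * Nat.factorial (k + 1) := by
      rw [Nat.factorial_succ]; push_cast; ring
    rw [hf]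
    have hm0 : (Nat.factorial m : ℚ) ≠ 0 := by positivity
    field_simp
    push_cast
    ring

lemma Sfun_rec (k n : ℕ) (hk : 1 ≤ k) :
    ((n : ℚ) + 2) * Sfun k (n + 2) = n * Sfun k n + 2 * k * Sfun (k - 1) (n + 1) := by
  have hst : ∀ m : ℕ, stirling1 m (k - 1) = stirling1 (m + 1) k + m * stirling1 m k := by
    intro m
    have := stirling1_rec m (k - 1)
    rw [show k - 1 + 1 = k from by omega] at this
    rw [this]; ring
  -- extend n * Sfun k n to Icc 1 (n+2)
  have hmid : (n : ℚ) * Sfun k n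
      = ∑ m ∈ Finset.Icc 1 (n + 2),
          (n : ℚ) * (((n - 1).choose (m - 1) : ℚ)
            * (2 ^ m * (Nat.factorial k) / (Nat.factorial m)) * stirling1 m k) := by
    rw [Sfun_eq_sum k n (by omega), Finset.mul_sum]
    apply Finset.sum_subset
    · intro m hm; rw [Finset.mem_Icc] at *; omega
    · intro m hm hm'
      rw [Finset.mem_Icc] at hm hm'
      rcases Nat.eq_zero_or_pos n with rfl | hn
      · push_cast; ring
      · rw [Nat.choose_eq_zero_of_lt (by omega : n - 1 < m - 1)]
        push_cast; ring
  have hlhs : ((n : ℚ) + 2) * Sfun k (n + 2)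
      = ∑ m ∈ Finset.Icc 1 (n + 2),
          ((n : ℚ) + 2) * (((n + 1).choose (m - 1) : ℚ)
            * (2 ^ m * (Nat.factorial k) / (Nat.factorial m)) * stirling1 m k) := by
    rw [Sfun_eq_sum k (n + 2) (by omega), Finset.mul_sum,
      show n + 2 - 1 = n + 1 from by omega]
  -- the difference equals P + Q
  have hdiff : ((n : ℚ) + 2) * Sfun k (n + 2) - n * Sfun k n
      = (∑ m ∈ Finset.Icc 1 (n + 2),
          (if m = 1 then 0 else (Nat.choose n (m - 2) : ℚ))
            * (2 ^ m * (Nat.factorial k) / (Nat.factorial (m - 1))) * stirling1 m k)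
        + (∑ m ∈ Finset.Icc 1 (n + 2),
          (m : ℚ) * ((Nat.choose n (m - 1) : ℚ)
            * (2 ^ (m + 1) * (Nat.factorial k) / (Nat.factorial m))) * stirling1 m k) := by
    rw [hlhs, hmid, ← Finset.sum_sub_distrib, ← Finset.sum_add_distrib]
    apply Finset.sum_congr rfl
    intro m hm
    rw [Finset.mem_Icc] at hm
    have h1 : 1 ≤ m := hm.1
    have hI := I1 n m h1
    have hfac : (Nat.factorial m : ℚ) = m * Nat.factorial (m - 1) := by
      rw [← Nat.mul_factorial_pred (by omega : m ≠ 0)]; push_cast; ring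
    have hm0 : (Nat.factorial (m - 1) : ℚ) ≠ 0 := by positivity
    have hmQ : (m : ℚ) ≠ 0 := by
      simp only [ne_eq, Nat.cast_eq_zero]; omega
    calc ((n : ℚ) + 2) * (((n + 1).choose (m - 1) : ℚ)
            * (2 ^ m * (Nat.factorial k) / (Nat.factorial m)) * stirling1 m k)
          - n * (((n - 1).choose (m - 1) : ℚ)
            * (2 ^ m * (Nat.factorial k) / (Nat.factorial m)) * stirling1 m k)
        = (((n : ℚ) + 2) * ((n + 1).choose (m - 1) : ℚ)
            - n * ((n - 1).choose (m - 1) : ℚ))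
            * ((2 ^ m * (Nat.factorial k) / (Nat.factorial m)) * stirling1 m k) := by ring
      _ = ((m : ℚ) * (if m = 1 then 0 else (Nat.choose n (m - 2) : ℚ))
            + 2 * m * Nat.choose n (m - 1))
            * ((2 ^ m * (Nat.factorial k) / (Nat.factorial m)) * stirling1 m k) := by
          rw [hI]
      _ = (if m = 1 then 0 else (Nat.choose n (m - 2) : ℚ))
            * (2 ^ m * (Nat.factorial k) / (Nat.factorial (m - 1))) * stirling1 m k
          + (m : ℚ) * ((Nat.choose n (m - 1) : ℚ)
            * (2 ^ (m + 1) * (Nat.factorial k) / (Nat.factorial m))) * stirling1 m k := by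
          rw [hfac]
          by_cases hm1 : m = 1
          · subst hm1
            norm_num [Nat.factorial]
            ring
          · rw [if_neg hm1]
            field_simp
            ring
  -- now the RHS
  rw [two_k_Sfun k n hk]
  have hrhs : ∑ m ∈ Finset.Icc 1 (n + 1),
      (Nat.choose n (m - 1) : ℚ) * (2 ^ (m + 1) * (Nat.factorial k) / (Nat.factorial m))
        * stirling1 m (k - 1)
      = (∑ m ∈ Finset.Icc 1 (n + 1),
          (Nat.choose n (m - 1) : ℚ) * (2 ^ (m + 1) * (Nat.factorial k) / (Nat.factorial m))
            * stirling1 (m + 1) k)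
        + (∑ m ∈ Finset.Icc 1 (n + 1),
          (m : ℚ) * ((Nat.choose n (m - 1) : ℚ)
            * (2 ^ (m + 1) * (Nat.factorial k) / (Nat.factorial m))) * stirling1 m k) := by
    rw [← Finset.sum_add_distrib]
    apply Finset.sum_congr rfl
    intro m hm
    rw [hst m]
    ring
  -- piece Q : extend Icc 1 (n+1) to Icc 1 (n+2)
  have hQ : ∑ m ∈ Finset.Icc 1 (n + 1),
      (m : ℚ) * ((Nat.choose n (m - 1) : ℚ)
        * (2 ^ (m + 1) * (Nat.factorial k) / (Nat.factorial m))) * stirling1 m k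
      = ∑ m ∈ Finset.Icc 1 (n + 2),
      (m : ℚ) * ((Nat.choose n (m - 1) : ℚ)
        * (2 ^ (m + 1) * (Nat.factorial k) / (Nat.factorial m))) * stirling1 m k := by
    apply Finset.sum_subset
    · intro m hm; rw [Finset.mem_Icc] at *; omega
    · intro m hm hm'
      rw [Finset.mem_Icc] at hm hm'
      rw [Nat.choose_eq_zero_of_lt (by omega : n < m - 1)]
      push_cast; ring
  -- piece P : reindex
  have hP : ∑ m ∈ Finset.Icc 1 (n + 1),
      (Nat.choose n (m - 1) : ℚ) * (2 ^ (m + 1) * (Nat.factorial k) / (Nat.factorial m))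
        * stirling1 (m + 1) k
      = ∑ m ∈ Finset.Icc 1 (n + 2),
      (if m = 1 then 0 else (Nat.choose n (m - 2) : ℚ))
        * (2 ^ m * (Nat.factorial k) / (Nat.factorial (m - 1))) * stirling1 m k := by
    have hmap : ∑ m ∈ Finset.Icc 1 (n + 1),
        (Nat.choose n (m - 1) : ℚ) * (2 ^ (m + 1) * (Nat.factorial k) / (Nat.factorial m))
          * stirling1 (m + 1) k
        = ∑ m ∈ Finset.Icc 2 (n + 2),
        (if m = 1 then 0 else (Nat.choose n (m - 2) : ℚ))
          * (2 ^ m * (Nat.factorial k) / (Nat.factorial (m - 1))) * stirling1 m k := by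
      rw [show (2 : ℕ) = 1 + 1 from rfl, show n + 2 = (n + 1) + 1 from rfl,
        ← Finset.map_add_right_Icc 1 (n + 1) 1, Finset.sum_map]
      apply Finset.sum_congr rfl
      intro m hm
      rw [Finset.mem_Icc] at hm
      simp only [addRightEmbedding_apply]
      rw [if_neg (by omega), show m + 1 - 2 = m - 1 from by omega,
        show m + 1 - 1 = m from by omega]
    rw [hmap]
    symm
    apply (Finset.sum_subset _ _).symm
    · intro m hm; rw [Finset.mem_Icc] at *; omega
    · intro m hm hm'
      rw [Finset.mem_Icc] at hm hm'
      rw [if_pos (by omega)]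
      ring
  rw [hrhs, hP, hQ] at *
  linarith [hdiff]

lemma Sfun_eq_zero_of_lt {k n : ℕ} (h : n < k) : Sfun k n = 0 := by
  rw [Sfun, if_neg (by omega), Finset.Icc_eq_empty (by omega), Finset.sum_empty]

lemma Sfun_eq_Tfun : ∀ n k, Sfun k n = Tfun k n := by
  intro n
  induction n using Nat.strong_induction_on with
  | _ n ih =>
    intro k
    match n with
    | 0 =>
      rcases Nat.eq_zero_or_pos k with rfl | hk
      · rw [Sfun_zero, Tfun_zero]
      · rw [Sfun_zero_right k (by omega), Tfun_zero_right k (by omega)]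
    | 1 => rw [Sfun_one_right, Tfun_one_right]
    | (m + 2) =>
      rcases Nat.eq_zero_or_pos k with rfl | hk
      · rw [Sfun_zero, Tfun_zero]
      · have hS := Sfun_rec k m hk
        have hT := Tfun_rec k m
        have hm2 : ((m : ℚ) + 2) ≠ 0 := by positivity
        apply mul_left_cancel₀ hm2
        rw [hS, hT, ih m (by omega) k, ih (m + 1) (by omega) (k - 1)]

lemma coef_c (t : ℕ) :
    (1 - (-1 : ℚ) ^ t) / (2 * t) = (1 / 2) * (if Odd t then (2 : ℚ) / t else 0) := by
  rcases Nat.even_or_odd t with h | h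
  · rw [if_neg (by simpa using h), h.neg_one_pow]
    simp
  · rw [if_pos h, h.neg_one_pow]
    have : (t : ℚ) ≠ 0 := by
      have : t ≠ 0 := by rcases h with ⟨s, hs⟩; omega
      exact_mod_cast this
    field_simp
    norm_num

lemma Sfun_key (k r : ℕ) :
    ∑ t ∈ Finset.Icc 1 r, ((1 - (-1 : ℚ) ^ t) / (2 * t)) * Sfun k (r - t)
      = (1 / 2) * Sfun (k + 1) r := by
  rw [Sfun_eq_Tfun]
  have h1 : Tfun (k + 1) r = ∑ j ∈ Finset.range (r + 1),
      (PowerSeries.coeff (R := ℚ) j Lser) * Tfun k (r - j) := by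
    rw [Tfun, pow_succ, mul_comm, PowerSeries.coeff_mul,
      Finset.Nat.sum_antidiagonal_eq_sum_range_succ_mk]
    rfl
  have h2 : ∑ j ∈ Finset.range (r + 1), (PowerSeries.coeff (R := ℚ) j Lser) * Tfun k (r - j)
      = ∑ j ∈ Finset.Icc 1 r, (PowerSeries.coeff (R := ℚ) j Lser) * Tfun k (r - j) := by
    symm
    apply Finset.sum_subset
    · intro j hj
      rw [Finset.mem_Icc] at hj
      rw [Finset.mem_range]
      omega
    · intro j hj hj'
      rw [Finset.mem_range] at hj
      rw [Finset.mem_Icc] at hj'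
      have : j = 0 := by omega
      subst this
      rw [show PowerSeries.coeff (R := ℚ) 0 Lser = 0 from by simp [Lser], zero_mul]
  rw [h1, h2, Finset.mul_sum]
  apply Finset.sum_congr rfl
  intro t ht
  rw [Sfun_eq_Tfun, coef_c, coeff_Lser]
  ring

lemma sum_swap_tri {M : Type*} [AddCommMonoid M] (r : ℕ) (F : ℕ → ℕ → M) :
    ∑ t ∈ Finset.Icc 1 r, ∑ k ∈ Finset.range (r - t + 1), F t k
      = ∑ k ∈ Finset.range (r + 1), ∑ t ∈ Finset.Icc 1 (r - k), F t k := by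
  rw [Finset.sum_sigma', Finset.sum_sigma']
  apply Finset.sum_nbij' (fun p => (⟨p.2, p.1⟩ : Σ _ : ℕ, ℕ))
    (fun p => (⟨p.2, p.1⟩ : Σ _ : ℕ, ℕ))
  · intro a ha
    simp only [Finset.mem_sigma, Finset.mem_Icc, Finset.mem_range] at *
    omega
  · intro a ha
    simp only [Finset.mem_sigma, Finset.mem_Icc, Finset.mem_range] at *
    omega
  · intro a _; rfl
  · intro a _; rfl
  · intro a _; rfl

lemma sum_swap_tri2 {M : Type*} [AddCommMonoid M] (n : ℕ) (F : ℕ → ℕ → M) :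
    ∑ i ∈ Finset.range (n + 1), ∑ t ∈ Finset.Icc 1 i, F i t
      = ∑ j ∈ Finset.range (n + 1), ∑ t ∈ Finset.Icc 1 (n - j), F (j + t) t := by
  rw [Finset.sum_sigma', Finset.sum_sigma']
  apply Finset.sum_nbij' (fun p => (⟨p.1 - p.2, p.2⟩ : Σ _ : ℕ, ℕ))
    (fun p => (⟨p.1 + p.2, p.2⟩ : Σ _ : ℕ, ℕ))
  · intro a ha
    simp only [Finset.mem_sigma, Finset.mem_Icc, Finset.mem_range] at *
    omega
  · intro a ha
    simp only [Finset.mem_sigma, Finset.mem_Icc, Finset.mem_range] at *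
    omega
  · intro a ha
    simp only [Finset.mem_sigma, Finset.mem_Icc, Finset.mem_range] at ha
    have : a.1 - a.2 + a.2 = a.1 := by omega
    exact Sigma.ext this (by simp)
  · intro a ha
    simp only [Finset.mem_sigma, Finset.mem_Icc, Finset.mem_range] at ha
    have : a.1 + a.2 - a.2 = a.1 := by omega
    exact Sigma.ext this (by simp)
  · intro a ha
    simp only [Finset.mem_sigma, Finset.mem_Icc, Finset.mem_range] at ha
    have : a.1 - a.2 + a.2 = a.1 := by omega
    rw [this]




noncomputable def Qpoly (N r : ℕ) : MvPolynomial (Fin (N + 1)) ℚ :=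
  ∑ k ∈ Finset.range (r + 1),
    MvPolynomial.C ((-1 : ℚ) ^ k / (2 ^ k * (Nat.factorial k)) * Sfun k r)
      * (Xv N 1) ^ k * (Xv N 0) ^ (r - k)

lemma DK1_Xv (N i : ℕ) (hi : i ≤ N) :
    DK1 N (Xv N i) = ∑ t ∈ Finset.Icc 1 i,
      MvPolynomial.C ((1 - (-1 : ℚ) ^ t) / (2 * t)) * Xv N (i - t) := by
  rw [Xv, dif_pos hi, DK1, MvPolynomial.mkDerivation_X]

lemma DK1_X0 (N : ℕ) : DK1 N (Xv N 0) = 0 := by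
  rw [DK1_Xv N 0 (by omega)]
  simp

lemma DK1_X1 (N : ℕ) (hN : 1 ≤ N) : DK1 N (Xv N 1) = Xv N 0 := by
  rw [DK1_Xv N 1 hN]
  norm_num

lemma DK1_C (N : ℕ) (a : ℚ) : DK1 N (MvPolynomial.C a) = 0 := by
  have : (MvPolynomial.C a : MvPolynomial (Fin (N + 1)) ℚ)
      = algebraMap ℚ (MvPolynomial (Fin (N + 1)) ℚ) a := rfl
  rw [this, Derivation.map_algebraMap]

lemma DK1_X0_pow (N j : ℕ) : DK1 N ((Xv N 0) ^ j) = 0 := by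
  rw [Derivation.leibniz_pow, DK1_X0]
  simp

lemma DK1_X1_pow (N : ℕ) (hN : 1 ≤ N) (k : ℕ) :
    DK1 N ((Xv N 1) ^ k) = k • ((Xv N 1) ^ (k - 1) * Xv N 0) := by
  rw [Derivation.leibniz_pow, DK1_X1 N hN, smul_eq_mul]

lemma C_mul_nsmul {σ : Type*} (c d : ℚ) (m : ℕ) (p : MvPolynomial σ ℚ) (h : c * m = d) :
    MvPolynomial.C c * (m • p) = MvPolynomial.C d * p := by
  rw [nsmul_eq_mul, ← map_natCast (MvPolynomial.C : ℚ →+* MvPolynomial σ ℚ) m, ← mul_assoc,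
    ← map_mul, h]

lemma DK1_Qpoly (N r : ℕ) (hN : 1 ≤ N) :
    DK1 N (Qpoly N r) = - ∑ j ∈ Finset.range r,
      MvPolynomial.C ((-1 : ℚ) ^ j / (2 ^ j * (Nat.factorial j)) * Sfun (j + 1) r / 2)
        * (Xv N 1) ^ j * (Xv N 0) ^ (r - j) := by
  rw [Qpoly, map_sum]
  have hterm : ∀ k ∈ Finset.range (r + 1),
      DK1 N (MvPolynomial.C ((-1 : ℚ) ^ k / (2 ^ k * (Nat.factorial k)) * Sfun k r)
        * (Xv N 1) ^ k * (Xv N 0) ^ (r - k))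
      = MvPolynomial.C ((-1 : ℚ) ^ k / (2 ^ k * (Nat.factorial k)) * Sfun k r)
        * (k • ((Xv N 1) ^ (k - 1) * Xv N 0)) * (Xv N 0) ^ (r - k) := by
    intro k _
    rw [Derivation.leibniz, DK1_X0_pow, smul_zero, zero_add, Derivation.leibniz, DK1_C,
      smul_zero, add_zero, DK1_X1_pow N hN, smul_eq_mul, smul_eq_mul]
    ring
  rw [Finset.sum_congr rfl hterm, Finset.sum_range_succ']
  have h0 : MvPolynomial.C ((-1 : ℚ) ^ 0 / (2 ^ 0 * (Nat.factorial 0)) * Sfun 0 r)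
      * ((0 : ℕ) • ((Xv N 1) ^ (0 - 1) * Xv N 0)) * (Xv N 0) ^ (r - 0) = 0 := by
    simp
  rw [h0, add_zero, ← Finset.sum_neg_distrib]
  apply Finset.sum_congr rfl
  intro k hk
  rw [Finset.mem_range] at hk
  have hx : (Xv N 0) ^ (r - k) = (Xv N 0) ^ (r - (k + 1)) * Xv N 0 := by
    rw [← pow_succ, show r - (k + 1) + 1 = r - k from by omega]
  have hnum : ((-1 : ℚ) ^ (k + 1) / (2 ^ (k + 1) * (Nat.factorial (k + 1))) * Sfun (k + 1) r)
      * ((k + 1 : ℕ) : ℚ)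
      = -((-1 : ℚ) ^ k / (2 ^ k * (Nat.factorial k)) * Sfun (k + 1) r / 2) := by
    rw [Nat.factorial_succ]
    have h1 : ((Nat.factorial k : ℚ)) ≠ 0 := by positivity
    push_cast
    field_simp
    ring
  rw [show k + 1 - 1 = k from by omega]
  calc MvPolynomial.C ((-1 : ℚ) ^ (k + 1) / (2 ^ (k + 1) * (Nat.factorial (k + 1)))
          * Sfun (k + 1) r) * ((k + 1) • ((Xv N 1) ^ k * Xv N 0)) * (Xv N 0) ^ (r - (k + 1))
      = (MvPolynomial.C (-((-1 : ℚ) ^ k / (2 ^ k * (Nat.factorial k)) * Sfun (k + 1) r / 2))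
          * ((Xv N 1) ^ k * Xv N 0)) * (Xv N 0) ^ (r - (k + 1)) := by
        rw [C_mul_nsmul _ _ _ _ hnum]
    _ = -(MvPolynomial.C ((-1 : ℚ) ^ k / (2 ^ k * (Nat.factorial k)) * Sfun (k + 1) r / 2)
          * (Xv N 1) ^ k * (Xv N 0) ^ (r - k)) := by
        rw [map_neg, hx]
        ring

lemma KL (N r : ℕ) (hN : 1 ≤ N) :
    DK1 N (Qpoly N r)
      + ∑ t ∈ Finset.Icc 1 r,
          MvPolynomial.C ((1 - (-1 : ℚ) ^ t) / (2 * t)) * (Xv N 0) ^ t * Qpoly N (r - t)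
      = 0 := by
  have main : ∑ t ∈ Finset.Icc 1 r,
      MvPolynomial.C ((1 - (-1 : ℚ) ^ t) / (2 * t)) * (Xv N 0) ^ t * Qpoly N (r - t)
      = ∑ j ∈ Finset.range r,
        MvPolynomial.C ((-1 : ℚ) ^ j / (2 ^ j * (Nat.factorial j)) * Sfun (j + 1) r / 2)
          * (Xv N 1) ^ j * (Xv N 0) ^ (r - j) := by
    have h1 : ∀ t ∈ Finset.Icc 1 r,
        MvPolynomial.C ((1 - (-1 : ℚ) ^ t) / (2 * t)) * (Xv N 0) ^ t * Qpoly N (r - t)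
        = ∑ k ∈ Finset.range (r - t + 1),
          MvPolynomial.C (((1 - (-1 : ℚ) ^ t) / (2 * t))
              * ((-1 : ℚ) ^ k / (2 ^ k * (Nat.factorial k)) * Sfun k (r - t)))
            * (Xv N 1) ^ k * (Xv N 0) ^ (r - k) := by
      intro t ht
      rw [Finset.mem_Icc] at ht
      rw [Qpoly, Finset.mul_sum]
      apply Finset.sum_congr rfl
      intro k hk
      rw [Finset.mem_range] at hk
      calc MvPolynomial.C ((1 - (-1 : ℚ) ^ t) / (2 * t)) * (Xv N 0) ^ t
            * (MvPolynomial.C ((-1 : ℚ) ^ k / (2 ^ k * (Nat.factorial k)) * Sfun k (r - t))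
              * (Xv N 1) ^ k * (Xv N 0) ^ (r - t - k))
          = (MvPolynomial.C ((1 - (-1 : ℚ) ^ t) / (2 * t))
              * MvPolynomial.C ((-1 : ℚ) ^ k / (2 ^ k * (Nat.factorial k)) * Sfun k (r - t)))
            * (Xv N 1) ^ k * ((Xv N 0) ^ t * (Xv N 0) ^ (r - t - k)) := by ring
        _ = _ := by
            rw [← map_mul, ← pow_add, show t + (r - t - k) = r - k from by omega]
    rw [Finset.sum_congr rfl h1, sum_swap_tri r
      (fun t k => MvPolynomial.C (((1 - (-1 : ℚ) ^ t) / (2 * t))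
          * ((-1 : ℚ) ^ k / (2 ^ k * (Nat.factorial k)) * Sfun k (r - t)))
        * (Xv N 1) ^ k * (Xv N 0) ^ (r - k))]
    have h2 : ∀ k ∈ Finset.range (r + 1),
        ∑ t ∈ Finset.Icc 1 (r - k),
          MvPolynomial.C (((1 - (-1 : ℚ) ^ t) / (2 * t))
              * ((-1 : ℚ) ^ k / (2 ^ k * (Nat.factorial k)) * Sfun k (r - t)))
            * (Xv N 1) ^ k * (Xv N 0) ^ (r - k)
        = MvPolynomial.C ((-1 : ℚ) ^ k / (2 ^ k * (Nat.factorial k)) * Sfun (k + 1) r / 2)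
            * (Xv N 1) ^ k * (Xv N 0) ^ (r - k) := by
      intro k _
      rw [← Finset.sum_mul, ← Finset.sum_mul, ← map_sum]
      congr 2
      congr 1
      have hext : ∑ t ∈ Finset.Icc 1 (r - k),
          ((1 - (-1 : ℚ) ^ t) / (2 * t))
            * ((-1 : ℚ) ^ k / (2 ^ k * (Nat.factorial k)) * Sfun k (r - t))
          = ∑ t ∈ Finset.Icc 1 r,
          ((1 - (-1 : ℚ) ^ t) / (2 * t))
            * ((-1 : ℚ) ^ k / (2 ^ k * (Nat.factorial k)) * Sfun k (r - t)) := by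
        apply Finset.sum_subset
        · intro t ht; rw [Finset.mem_Icc] at *; omega
        · intro t ht ht'
          rw [Finset.mem_Icc] at ht ht'
          rw [Sfun_eq_zero_of_lt (show r - t < k from by omega)]
          ring
      rw [hext]
      have := Sfun_key k r
      calc ∑ t ∈ Finset.Icc 1 r, ((1 - (-1 : ℚ) ^ t) / (2 * t))
            * ((-1 : ℚ) ^ k / (2 ^ k * (Nat.factorial k)) * Sfun k (r - t))
          = ((-1 : ℚ) ^ k / (2 ^ k * (Nat.factorial k)))
            * ∑ t ∈ Finset.Icc 1 r, ((1 - (-1 : ℚ) ^ t) / (2 * t)) * Sfun k (r - t) := by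
            rw [Finset.mul_sum]
            apply Finset.sum_congr rfl
            intro t _
            ring
        _ = _ := by rw [this]; ring
    rw [Finset.sum_congr rfl h2, Finset.sum_range_succ,
      Sfun_eq_zero_of_lt (show r < r + 1 from by omega)]
    norm_num
  rw [DK1_Qpoly N r hN, main, neg_add_cancel]


/-- For `2 ≤ n ≤ N` the Cayley element `Ĉ_n` lies in the kernel of `D_{K1}`. -/
theorem DK1_Chat_eq_zero (N n : ℕ) (h2 : 2 ≤ n) (hn : n ≤ N) :
    DK1 N (Chat N n) = 0 := by

  have hN : 1 ≤ N := by omega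
  have hchat : Chat N n
      = ∑ i ∈ Finset.range (n + 1), Xv N i * (Xv N 0) ^ i * Qpoly N (n - i) := by
    rw [Chat]
    apply Finset.sum_congr rfl
    intro i hi
    rw [Finset.mem_range] at hi
    rw [Qpoly, Finset.mul_sum]
    apply Finset.sum_congr rfl
    intro k hk
    rw [Finset.mem_range] at hk
    calc MvPolynomial.C ((-1 : ℚ) ^ k / (2 ^ k * (Nat.factorial k)) * Sfun k (n - i))
          * Xv N i * (Xv N 1) ^ k * (Xv N 0) ^ (n - k)
        = Xv N i * (MvPolynomial.C ((-1 : ℚ) ^ k / (2 ^ k * (Nat.factorial k)) * Sfun k (n - i))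
            * (Xv N 1) ^ k * (Xv N 0) ^ (n - k)) := by ring
      _ = Xv N i * (Xv N 0) ^ i
          * (MvPolynomial.C ((-1 : ℚ) ^ k / (2 ^ k * (Nat.factorial k)) * Sfun k (n - i))
            * (Xv N 1) ^ k * (Xv N 0) ^ (n - i - k)) := by
          rw [show n - k = i + (n - i - k) from by omega, pow_add]
          ring
  rw [hchat, map_sum]
  have hterm : ∀ i ∈ Finset.range (n + 1),
      DK1 N (Xv N i * (Xv N 0) ^ i * Qpoly N (n - i))
      = DK1 N (Xv N i) * ((Xv N 0) ^ i * Qpoly N (n - i))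
        + Xv N i * (Xv N 0) ^ i * DK1 N (Qpoly N (n - i)) := by
    intro i _
    rw [Derivation.leibniz, Derivation.leibniz, DK1_X0_pow, smul_zero, zero_add,
      smul_eq_mul, smul_eq_mul, smul_eq_mul]
    ring
  rw [Finset.sum_congr rfl hterm, Finset.sum_add_distrib]
  have hfirst : ∑ i ∈ Finset.range (n + 1),
      DK1 N (Xv N i) * ((Xv N 0) ^ i * Qpoly N (n - i))
      = ∑ j ∈ Finset.range (n + 1), Xv N j * (Xv N 0) ^ j
          * ∑ t ∈ Finset.Icc 1 (n - j),
              MvPolynomial.C ((1 - (-1 : ℚ) ^ t) / (2 * t)) * (Xv N 0) ^ t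
                * Qpoly N (n - j - t) := by
    have e1 : ∀ i ∈ Finset.range (n + 1),
        DK1 N (Xv N i) * ((Xv N 0) ^ i * Qpoly N (n - i))
        = ∑ t ∈ Finset.Icc 1 i,
            MvPolynomial.C ((1 - (-1 : ℚ) ^ t) / (2 * t)) * Xv N (i - t)
              * ((Xv N 0) ^ i * Qpoly N (n - i)) := by
      intro i hi
      rw [Finset.mem_range] at hi
      rw [DK1_Xv N i (by omega), Finset.sum_mul]
    rw [Finset.sum_congr rfl e1,
      sum_swap_tri2 n (fun i t => MvPolynomial.C ((1 - (-1 : ℚ) ^ t) / (2 * t)) * Xv N (i - t)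
        * ((Xv N 0) ^ i * Qpoly N (n - i)))]
    apply Finset.sum_congr rfl
    intro j hj
    rw [Finset.mem_range] at hj
    rw [Finset.mul_sum]
    apply Finset.sum_congr rfl
    intro t ht
    rw [Finset.mem_Icc] at ht
    rw [show j + t - t = j from by omega, show n - (j + t) = n - j - t from by omega,
      pow_add]
    ring
  rw [hfirst, ← Finset.sum_add_distrib]
  apply Finset.sum_eq_zero
  intro j hj
  have := KL N (n - j) hN
  calc Xv N j * (Xv N 0) ^ j
        * (∑ t ∈ Finset.Icc 1 (n - j),
            MvPolynomial.C ((1 - (-1 : ℚ) ^ t) / (2 * t)) * (Xv N 0) ^ t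
              * Qpoly N (n - j - t))
      + Xv N j * (Xv N 0) ^ j * DK1 N (Qpoly N (n - j))
      = Xv N j * (Xv N 0) ^ j
        * (DK1 N (Qpoly N (n - j))
          + ∑ t ∈ Finset.Icc 1 (n - j),
              MvPolynomial.C ((1 - (-1 : ℚ) ^ t) / (2 * t)) * (Xv N 0) ^ t
                * Qpoly N (n - j - t)) := by ring
    _ = 0 := by rw [this, mul_zero]
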